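/- If m > 2, then for every s ∈ R (including non-units) there exists a primitive vector v ∈ V with h(v,v) = s; in particular h is isotropic. -/

import Mathlib

open MulOpposite

/-- A `*`-hermitian form on a right `A`-module `V` (right modules are encoded as
modules over the opposite ring `Aᵐᵒᵖ`): it is additive and `A`-linear in the second
variable and satisfies `h v u = (h u v)*`. -/
structure HermitianForm (A V : Type*) [Ring A] [StarRing A] [AddCommGroup V]
    [Module Aᵐᵒᵖ V] where
  toFun : V → V → A
  add_right : ∀ u v w : V, toFun u (v + w) = toFun u v + toFun u w
  smul_right : ∀ (a : A) (u v : V), toFun u (op a • v) = toFun u v * a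
  conj_symm : ∀ u v : V, toFun v u = star (toFun u v)

namespace HermitianForm

variable {A V : Type*} [Ring A] [StarRing A] [AddCommGroup V] [Module Aᵐᵒᵖ V]

/-- Non-degeneracy: the map `u ↦ h u -` is a bijection of `V` onto the dual module. -/
def Nondeg (h : HermitianForm A V) : Prop :=
  ∀ φ : V →ₗ[Aᵐᵒᵖ] A, ∃! u : V, ∀ v : V, h.toFun u v = φ v

variable (h : HermitianForm A V)

lemma add_left (u v w : V) : h.toFun (u + v) w = h.toFun u w + h.toFun v w := by
  rw [h.conj_symm, h.add_right, star_add, ← h.conj_symm, ← h.conj_symm]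

lemma smul_left (a : A) (u v : V) : h.toFun (op a • u) v = star a * h.toFun u v := by
  rw [h.conj_symm, h.smul_right, star_mul, ← h.conj_symm]

lemma zero_right (u : V) : h.toFun u 0 = 0 := by
  have h2 := h.add_right u 0 0
  rw [add_zero] at h2
  exact (left_eq_add.mp h2)

lemma zero_left (u : V) : h.toFun 0 u = 0 := by
  rw [h.conj_symm, zero_right, star_zero]

lemma smul_left' (a : Aᵐᵒᵖ) (u v : V) : h.toFun (a • u) v = star (unop a) * h.toFun u v := by
  conv_lhs => rw [← op_unop a]
  rw [h.smul_left]

lemma smul_right' (a : Aᵐᵒᵖ) (u v : V) : h.toFun u (a • v) = h.toFun u v * unop a := by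
  conv_lhs => rw [← op_unop a]
  rw [h.smul_right]

lemma sum_left {ι : Type*} (s : Finset ι) (g : ι → V) (w : V) :
    h.toFun (∑ i ∈ s, g i) w = ∑ i ∈ s, h.toFun (g i) w := by
  classical
  induction s using Finset.induction_on with
  | empty => simpa using h.zero_left w
  | insert _ _ hns ih => rw [Finset.sum_insert hns, Finset.sum_insert hns, h.add_left, ih]

lemma sum_right {ι : Type*} (s : Finset ι) (g : ι → V) (w : V) :
    h.toFun w (∑ i ∈ s, g i) = ∑ i ∈ s, h.toFun w (g i) := by
  classical
  induction s using Finset.induction_on with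
  | empty => simpa using h.zero_right w
  | insert _ _ hns ih => rw [Finset.sum_insert hns, Finset.sum_insert hns, h.add_right, ih]

end HermitianForm

/-- A vector of the free module `V` of rank `m` is primitive if it belongs to a basis. -/
def IsPrimitive (A : Type*) {V : Type*} [Ring A] [AddCommGroup V] [Module Aᵐᵒᵖ V]
    (m : ℕ) (v : V) : Prop :=
  ∃ (b : Module.Basis (Fin m) Aᵐᵒᵖ V) (i : Fin m), b i = v



section LocalUnits
variable {A : Type*} [Ring A] [IsLocalRing A]

lemma idem_zero_or_one {e : A} (he : e * e = e) : e = 0 ∨ e = 1 := by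
  rcases IsLocalRing.isUnit_or_isUnit_of_add_one (a := e) (b := 1 - e) (by abel) with hu | hu
  · exact Or.inr (hu.mul_left_cancel (by rw [he, mul_one]))
  · left
    have key : (1 - e) * (1 - e) = (1 - e) * 1 := by
      rw [sub_mul, one_mul, mul_sub, mul_one, he, mul_one]; abel
    exact sub_eq_self.mp (hu.mul_left_cancel key)

lemma isUnit_of_isUnit_mul_right {a x : A} (h : IsUnit (a * x)) : IsUnit x := by
  obtain ⟨u, hu⟩ := h
  set y : A := (↑u⁻¹ : A) * a with hy
  have hyx : y * x = 1 := by
    rw [hy, mul_assoc, ← hu, Units.inv_mul]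
  have hidem : (x * y) * (x * y) = x * y := by
    rw [mul_assoc, ← mul_assoc y x, hyx, one_mul]
  rcases idem_zero_or_one hidem with h0 | h1
  · exfalso
    have hx0 : x = 0 := by
      have := congrArg (· * x) h0
      simpa [mul_assoc, hyx] using this
    have : IsUnit (0 : A) := by rw [← mul_zero a, ← hx0]; exact ⟨u, hu⟩
    exact not_isUnit_zero this
  · exact ⟨⟨x, y, h1, hyx⟩, rfl⟩

lemma isUnit_of_isUnit_mul_left {a x : A} (h : IsUnit (x * a)) : IsUnit x := by
  obtain ⟨u, hu⟩ := h
  set y : A := a * (↑u⁻¹ : A) with hy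
  have hxy : x * y = 1 := by rw [hy, ← mul_assoc, ← hu, Units.mul_inv]
  have hidem : (y * x) * (y * x) = y * x := by
    rw [mul_assoc, ← mul_assoc x y, hxy, one_mul]
  rcases idem_zero_or_one hidem with h0 | h1
  · exfalso
    have hx0 : x = 0 := by
      have := congrArg (x * ·) h0
      simpa [← mul_assoc, hxy] using this
    have : IsUnit (0 : A) := by rw [← zero_mul a, ← hx0]; exact ⟨u, hu⟩
    exact not_isUnit_zero this
  · exact ⟨⟨x, y, hxy, h1⟩, rfl⟩

lemma nonunit_mul_right {x : A} (hx : ¬ IsUnit x) (a : A) : ¬ IsUnit (a * x) :=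
  fun h => hx (isUnit_of_isUnit_mul_right h)

lemma nonunit_mul_left {x : A} (hx : ¬ IsUnit x) (a : A) : ¬ IsUnit (x * a) :=
  fun h => hx (isUnit_of_isUnit_mul_left h)

lemma nonunit_add {a b : A} (ha : ¬ IsUnit a) (hb : ¬ IsUnit b) : ¬ IsUnit (a + b) := by
  intro h
  obtain ⟨u, hu⟩ := h
  have : a * ↑u⁻¹ + b * ↑u⁻¹ = 1 := by rw [← add_mul, ← hu, Units.mul_inv]
  rcases IsLocalRing.isUnit_or_isUnit_of_add_one this with h' | h'
  · exact ha (isUnit_of_isUnit_mul_left h')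
  · exact hb (isUnit_of_isUnit_mul_left h')

lemma unit_add_nonunit {a x : A} (ha : IsUnit a) (hx : ¬ IsUnit x) : IsUnit (a + x) := by
  by_contra hax
  have : ¬ IsUnit ((a + x) + (-x)) := nonunit_add hax (by simpa using hx)
  simp only [add_neg_cancel_right] at this
  exact this ha

lemma sum_nonunit {ι : Type*} (s : Finset ι) (f : ι → A) (hf : ∀ i ∈ s, ¬ IsUnit (f i)) :
    ¬ IsUnit (∑ i ∈ s, f i) := by
  classical
  induction s using Finset.induction_on with
  | empty => simpa using not_isUnit_zero
  | insert _ _ hns ih =>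
    rw [Finset.sum_insert hns]
    exact nonunit_add (hf _ (Finset.mem_insert_self _ _))
      (ih fun i hi => hf i (Finset.mem_insert_of_mem hi))

end LocalUnits

section BasisTools
variable {A V : Type*} [Ring A] [AddCommGroup V] [Module Aᵐᵒᵖ V]
variable {ι : Type*} [Fintype ι] [DecidableEq ι]

/-- The linear functional `v ↦ ∑ j, (coord j v) * α j`. -/
noncomputable def shearAux (c : Module.Basis ι Aᵐᵒᵖ V) (α : ι → Aᵐᵒᵖ) : V →ₗ[Aᵐᵒᵖ] Aᵐᵒᵖ :=
  ∑ j, (LinearMap.toSpanSingleton Aᵐᵒᵖ Aᵐᵒᵖ (α j)).comp (c.coord j)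

lemma shearAux_apply (c : Module.Basis ι Aᵐᵒᵖ V) (α : ι → Aᵐᵒᵖ) (v : V) :
    shearAux c α v = ∑ j, (c.coord j v) * α j := by
  simp [shearAux, LinearMap.toSpanSingleton_apply, smul_eq_mul]

lemma shearAux_basis (c : Module.Basis ι Aᵐᵒᵖ V) (α : ι → Aᵐᵒᵖ) (j : ι) :
    shearAux c α (c j) = α j := by
  rw [shearAux_apply]
  rw [Finset.sum_eq_single j]
  · simp [Module.Basis.coord_apply, Module.Basis.repr_self]
  · intro i _ hij
    simp [Module.Basis.coord_apply, Module.Basis.repr_self, Finsupp.single_apply, hij.symm]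
  · intro hj; exact absurd (Finset.mem_univ j) hj

noncomputable def shearEquiv (c : Module.Basis ι Aᵐᵒᵖ V) (k : ι) (α : ι → Aᵐᵒᵖ) (hα : α k = 0) :
    V ≃ₗ[Aᵐᵒᵖ] V := by
  refine LinearEquiv.ofLinear
    (LinearMap.id + (LinearMap.toSpanSingleton Aᵐᵒᵖ V (c k)).comp (shearAux c α))
    (LinearMap.id - (LinearMap.toSpanSingleton Aᵐᵒᵖ V (c k)).comp (shearAux c α)) ?_ ?_ <;>
  · ext v
    have hck : shearAux c α ((shearAux c α v) • c k) = 0 := by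
      rw [map_smul, shearAux_basis, hα, smul_eq_mul, mul_zero]
    simp only [LinearMap.comp_apply, LinearMap.add_apply, LinearMap.sub_apply,
      LinearMap.id_apply, LinearMap.toSpanSingleton_apply, map_add, map_sub, hck,
      LinearMap.id_coe, id_eq]
    rw [zero_smul]
    abel

noncomputable def shearBasis (c : Module.Basis ι Aᵐᵒᵖ V) (k : ι) (α : ι → Aᵐᵒᵖ) (hα : α k = 0) :
    Module.Basis ι Aᵐᵒᵖ V := c.map (shearEquiv c k α hα)

lemma shearBasis_apply (c : Module.Basis ι Aᵐᵒᵖ V) (k : ι) (α : ι → Aᵐᵒᵖ) (hα : α k = 0) (j : ι) :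
    shearBasis c k α hα j = c j + α j • c k := by
  simp [shearBasis, Module.Basis.map_apply, shearEquiv, LinearEquiv.ofLinear_apply,
    LinearMap.toSpanSingleton_apply, shearAux_basis]

noncomputable def replaceEquiv (c : Module.Basis ι Aᵐᵒᵖ V) (i : ι) (f : V) (u : Aᵐᵒᵖˣ)
    (huu : (u : Aᵐᵒᵖ) = c.coord i f) : V ≃ₗ[Aᵐᵒᵖ] V := by
  refine LinearEquiv.ofLinear
    (LinearMap.id + (LinearMap.toSpanSingleton Aᵐᵒᵖ V (f - c i)).comp (c.coord i))
    (LinearMap.id - (LinearMap.toSpanSingleton Aᵐᵒᵖ V (f - c i)).comp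
      ((LinearMap.toSpanSingleton Aᵐᵒᵖ Aᵐᵒᵖ (↑u⁻¹)).comp (c.coord i))) ?_ ?_
  · apply c.ext
    intro j
    by_cases hji : j = i
    · subst hji
      have hφi : c.coord j (c j) = 1 := by simp
      simp only [LinearMap.comp_apply, LinearMap.add_apply, LinearMap.sub_apply,
        LinearMap.id_apply, LinearMap.toSpanSingleton_apply, LinearMap.id_coe, id_eq,
        hφi, one_smul, one_mul, smul_eq_mul]
      have hval : (c.coord j) (c j - (↑u⁻¹ : Aᵐᵒᵖ) • (f - c j)) = (↑u⁻¹ : Aᵐᵒᵖ) := by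
        rw [map_sub, map_smul, map_sub, hφi, ← huu, smul_eq_mul, mul_sub, mul_one,
          Units.inv_mul]
        abel
      rw [hval]
      abel
    · have hφj : c.coord i (c j) = 0 := by
        simp [Module.Basis.coord_apply, Module.Basis.repr_self, Finsupp.single_apply, hji]
      simp [LinearMap.comp_apply, hφj]
  · apply c.ext
    intro j
    by_cases hji : j = i
    · subst hji
      have hφi : c.coord j (c j) = 1 := by simp
      simp only [LinearMap.comp_apply, LinearMap.add_apply, LinearMap.sub_apply,
        LinearMap.id_apply, LinearMap.toSpanSingleton_apply, LinearMap.id_coe, id_eq,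
        hφi, one_smul, one_mul, smul_eq_mul]
      have hval : (c.coord j) (c j + (f - c j)) = (u : Aᵐᵒᵖ) := by
        rw [map_add, map_sub, hφi, ← huu]
        abel
      rw [hval, Units.mul_inv, one_smul]
      abel
    · have hφj : c.coord i (c j) = 0 := by
        simp [Module.Basis.coord_apply, Module.Basis.repr_self, Finsupp.single_apply, hji]
      simp [LinearMap.comp_apply, hφj]

noncomputable def replaceBasis (c : Module.Basis ι Aᵐᵒᵖ V) (i : ι) (f : V) (u : Aᵐᵒᵖˣ)
    (huu : (u : Aᵐᵒᵖ) = c.coord i f) : Module.Basis ι Aᵐᵒᵖ V :=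
  c.map (replaceEquiv c i f u huu)

lemma replaceBasis_same (c : Module.Basis ι Aᵐᵒᵖ V) (i : ι) (f : V) (u : Aᵐᵒᵖˣ)
    (huu : (u : Aᵐᵒᵖ) = c.coord i f) : replaceBasis c i f u huu i = f := by
  have hφi : c.coord i (c i) = 1 := by simp
  simp only [replaceBasis, Module.Basis.map_apply, replaceEquiv, LinearEquiv.ofLinear_apply,
    LinearMap.add_apply, LinearMap.comp_apply, LinearMap.id_apply,
    LinearMap.toSpanSingleton_apply, hφi, one_smul]
  abel

lemma replaceBasis_ne (c : Module.Basis ι Aᵐᵒᵖ V) (i : ι) (f : V) (u : Aᵐᵒᵖˣ)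
    (huu : (u : Aᵐᵒᵖ) = c.coord i f) (j : ι) (hji : j ≠ i) :
    replaceBasis c i f u huu j = c j := by
  have hφj : c.coord i (c j) = 0 := by
    simp [Module.Basis.coord_apply, Module.Basis.repr_self, Finsupp.single_apply, hji]
  simp [replaceBasis, Module.Basis.map_apply, replaceEquiv, LinearEquiv.ofLinear_apply,
    LinearMap.comp_apply, hφj]

end BasisTools

section Dual
variable {A V : Type*} [Ring A] [StarRing A] [AddCommGroup V] [Module Aᵐᵒᵖ V] {m : ℕ}

/-- The `k`-th coordinate functional, valued in `A`. -/
noncomputable def coordFun (c : Module.Basis (Fin m) Aᵐᵒᵖ V) (k : Fin m) : V →ₗ[Aᵐᵒᵖ] A where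
  toFun v := unop (c.coord k v)
  map_add' u v := by simp
  map_smul' a v := by
    simp [map_smul, smul_eq_mul, unop_mul, MulOpposite.smul_eq_mul_unop]

lemma exists_dual (h : HermitianForm A V) (hnd : h.Nondeg) (c : Module.Basis (Fin m) Aᵐᵒᵖ V)
    (k : Fin m) : ∃ u : V, ∀ j, h.toFun u (c j) = if j = k then 1 else 0 := by
  obtain ⟨u, hu, -⟩ := hnd (coordFun c k)
  refine ⟨u, fun j => ?_⟩
  rw [hu (c j)]
  simp only [coordFun, LinearMap.coe_mk, AddHom.coe_mk, Module.Basis.coord_apply, Module.Basis.repr_self,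
    Finsupp.single_apply, eq_comm]
  split <;> simp

lemma repr_expand (h : HermitianForm A V) (c : Module.Basis (Fin m) Aᵐᵒᵖ V) (u w : V) :
    h.toFun u w = ∑ j, star (unop (c.repr u j)) * h.toFun (c j) w := by
  conv_lhs => rw [← c.sum_repr u]
  rw [h.sum_left]
  refine Finset.sum_congr rfl fun j _ => ?_
  rw [h.smul_left']

end Dual


section DiagStep
variable {A V : Type*} [Ring A] [StarRing A] [IsLocalRing A] [AddCommGroup V] [Module Aᵐᵒᵖ V]
  {m : ℕ}

lemma diag_step (h : HermitianForm A V) (hnd : h.Nondeg) (h2 : IsUnit (2 : A))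
    (c : Module.Basis (Fin m) Aᵐᵒᵖ V) (K : Finset (Fin m))
    (hK : ∀ i ∈ K, IsUnit (h.toFun (c i) (c i)) ∧ ∀ j, j ≠ i → h.toFun (c i) (c j) = 0)
    (k : Fin m) (hk : k ∉ K) :
    ∃ c' : Module.Basis (Fin m) Aᵐᵒᵖ V,
      ∀ i ∈ insert k K, IsUnit (h.toFun (c' i) (c' i)) ∧
        ∀ j, j ≠ i → h.toFun (c' i) (c' j) = 0 := by
  classical
  -- Step 1: find an index `j0` with `h (c j0) (c k)` a unit.
  obtain ⟨u, hu⟩ := exists_dual h hnd c k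
  have h1 : (1 : A) = ∑ j, star (unop (c.repr u j)) * h.toFun (c j) (c k) := by
    have he := repr_expand h c u (c k)
    rw [hu k, if_pos rfl] at he
    exact he
  have hex : ∃ j0, IsUnit (h.toFun (c j0) (c k)) := by
    by_contra hno
    push_neg at hno
    have hnu := sum_nonunit Finset.univ
      (fun j => star (unop (c.repr u j)) * h.toFun (c j) (c k))
      (fun j _ => nonunit_mul_right (hno j) _)
    rw [← h1] at hnu
    exact hnu isUnit_one
  obtain ⟨j0, hj0⟩ := hex
  -- Step 2: build `c₁` whose `k`-th vector has unit length, keeping `K`-part intact.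
  have step2 : ∃ c₁ : Module.Basis (Fin m) Aᵐᵒᵖ V,
      IsUnit (h.toFun (c₁ k) (c₁ k)) ∧
      ∀ i ∈ K, c₁ i = c i ∧ (∀ j, j ≠ i → h.toFun (c₁ i) (c₁ j) = 0) := by
    have hj0K : j0 ∉ K := by
      intro hmem
      have := (hK j0 hmem).2 k (fun hkj => hk (hkj ▸ hmem))
      rw [this] at hj0
      exact not_isUnit_zero hj0
    by_cases hkk : IsUnit (h.toFun (c k) (c k))
    · exact ⟨c, hkk, fun i hi => ⟨rfl, (hK i hi).2⟩⟩
    · have hj0k : j0 ≠ k := by rintro rfl; exact hkk hj0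
      by_cases hjj : IsUnit (h.toFun (c j0) (c j0))
      · -- swap j0 and k
        refine ⟨c.reindex (Equiv.swap j0 k), ?_, ?_⟩
        · rw [Module.Basis.reindex_apply, Equiv.symm_swap, Equiv.swap_apply_right]
          exact hjj
        · intro i hi
          have hij0 : i ≠ j0 := fun hh => hj0K (hh ▸ hi)
          have hik : i ≠ k := fun hh => hk (hh ▸ hi)
          have hci : (c.reindex (Equiv.swap j0 k)) i = c i := by
            rw [Module.Basis.reindex_apply, Equiv.symm_swap, Equiv.swap_apply_of_ne_of_ne hij0 hik]
          refine ⟨hci, fun j hj => ?_⟩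
          rw [hci, Module.Basis.reindex_apply, Equiv.symm_swap]
          exact (hK i hi).2 _ (fun hh => hj (by
            have := (Equiv.swap j0 k).injective
              (a₁ := j) (a₂ := (Equiv.swap j0 k) i)
            rw [Equiv.swap_apply_of_ne_of_ne hij0 hik] at this
            exact this (by rw [hh, Equiv.swap_apply_of_ne_of_ne hij0 hik])))
      · -- modify c k by a multiple of c j0
        obtain ⟨w, hw⟩ := hj0
        set a : A := star ((↑w⁻¹ : A)) with ha
        set α : Fin m → Aᵐᵒᵖ := fun i => if i = k then op a else 0 with hα
        have hα0 : α j0 = 0 := by rw [hα]; simp [hj0k]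
        have hinv : (↑w⁻¹ : A) * h.toFun (c j0) (c k) = 1 := by
          rw [← hw, Units.inv_mul]
        refine ⟨shearBasis c j0 α hα0, ?_, ?_⟩
        · have hck : shearBasis c j0 α hα0 k = c k + op a • c j0 := by
            rw [shearBasis_apply, hα]; simp
          rw [hck]
          have hcross1 : h.toFun (c k) (c j0) * a = 1 := by
            rw [h.conj_symm, ha, ← star_mul, hinv, star_one]
          have hcross2 : star a * h.toFun (c j0) (c k) = 1 := by
            rw [ha, star_star, hinv]
          have hexp : h.toFun (c k + op a • c j0) (c k + op a • c j0)
              = (h.toFun (c k) (c k) + star a * (h.toFun (c j0) (c j0) * a))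
                + (h.toFun (c k) (c j0) * a + star a * h.toFun (c j0) (c k)) := by
            rw [h.add_right, h.add_left, h.add_left, h.smul_right, h.smul_left,
              h.smul_left, h.smul_right]
            abel
          rw [hexp, hcross1, hcross2]
          have hnu : ¬ IsUnit (h.toFun (c k) (c k) + star a * (h.toFun (c j0) (c j0) * a)) :=
            nonunit_add hkk (nonunit_mul_right (nonunit_mul_left hjj a) _)
          have h2' := unit_add_nonunit (show IsUnit ((1:A)+1) by rwa [one_add_one_eq_two]) hnu
          rwa [add_comm] at h2'
        · intro i hi
          have hik : i ≠ k := fun hh => hk (hh ▸ hi)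
          have hij0 : i ≠ j0 := fun hh => hj0K (hh ▸ hi)
          have hci : shearBasis c j0 α hα0 i = c i := by
            rw [shearBasis_apply, hα]; simp [hik]
          refine ⟨hci, fun j hj => ?_⟩
          rw [hci]
          by_cases hjk : j = k
          · have hcj : shearBasis c j0 α hα0 j = c j + op a • c j0 := by
              rw [shearBasis_apply, hα]; simp [hjk]
            rw [hcj, h.add_right, h.smul_right, (hK i hi).2 j hj,
              (hK i hi).2 j0 (Ne.symm hij0), zero_mul, add_zero]
          · have hcj : shearBasis c j0 α hα0 j = c j := by
              rw [shearBasis_apply, hα]; simp [hjk]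
            rw [hcj]
            exact (hK i hi).2 j hj
  obtain ⟨c₁, hc₁k, hc₁K⟩ := step2
  -- Step 3: orthogonalize the other vectors against `c₁ k`.
  obtain ⟨ud, hud⟩ := hc₁k
  set β : Fin m → Aᵐᵒᵖ :=
    fun j => if j = k then 0 else op (-((↑ud⁻¹ : A) * h.toFun (c₁ k) (c₁ j))) with hβ
  have hβ0 : β k = 0 := by rw [hβ]; simp
  refine ⟨shearBasis c₁ k β hβ0, ?_⟩
  have hck : shearBasis c₁ k β hβ0 k = c₁ k := by
    rw [shearBasis_apply, hβ]; simp
  have hcj : ∀ j, j ≠ k → shearBasis c₁ k β hβ0 j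
      = c₁ j + op (-((↑ud⁻¹ : A) * h.toFun (c₁ k) (c₁ j))) • c₁ k := by
    intro j hjk; rw [shearBasis_apply, hβ]; simp [hjk]
  have horthk : ∀ j, j ≠ k → h.toFun (c₁ k) (shearBasis c₁ k β hβ0 j) = 0 := by
    intro j hjk
    rw [hcj j hjk, h.add_right, h.smul_right, mul_neg, ← mul_assoc, ← hud,
      Units.mul_inv, one_mul, add_neg_cancel]
  have hKfix : ∀ i ∈ K, shearBasis c₁ k β hβ0 i = c₁ i := by
    intro i hi
    have hik : i ≠ k := fun hh => hk (hh ▸ hi)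
    have hz : h.toFun (c₁ k) (c₁ i) = 0 := by
      rw [h.conj_symm, (hc₁K i hi).2 k (Ne.symm hik), star_zero]
    rw [hcj i hik, hz]
    simp
  intro i hi
  rcases Finset.mem_insert.mp hi with rfl | hiK
  · constructor
    · rw [hck, ← hud]; exact ud.isUnit
    · intro j hj
      rw [hck]
      exact horthk j hj
  · have hik : i ≠ k := fun hh => hk (hh ▸ hiK)
    have hci : shearBasis c₁ k β hβ0 i = c₁ i := hKfix i hiK
    constructor
    · rw [hci, (hc₁K i hiK).1]
      exact (hK i hiK).1
    · intro j hj
      rw [hci]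
      by_cases hjk : j = k
      · subst hjk
        rw [hck]
        exact (hc₁K i hiK).2 j (Ne.symm hik)
      · rw [hcj j hjk, h.add_right, h.smul_right, (hc₁K i hiK).2 j hj,
          (hc₁K i hiK).2 k (Ne.symm hik), zero_mul, add_zero]

end DiagStep

lemma finite_field_binary {κ : Type*} [Field κ] [Finite κ] (hodd : Odd (Nat.card κ))
    (b c t : κ) (hb : b ≠ 0) (hc : c ≠ 0) : ∃ y z : κ, b * y ^ 2 + c * z ^ 2 = t := by
  have : Fintype κ := Fintype.ofFinite κ
  have hcard : Fintype.card κ % 2 = 1 := by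
    rw [← Nat.card_eq_fintype_card]
    exact Nat.odd_iff.mp hodd
  obtain ⟨y, z, hyz⟩ := FiniteField.exists_root_sum_quadratic
    (f := Polynomial.C b * Polynomial.X ^ 2 + Polynomial.C 0 * Polynomial.X + Polynomial.C (-t))
    (g := Polynomial.C c * Polynomial.X ^ 2 + Polynomial.C 0 * Polynomial.X + Polynomial.C 0)
    (Polynomial.degree_quadratic hb) (Polynomial.degree_quadratic hc) hcard
  refine ⟨y, z, ?_⟩
  simp only [Polynomial.eval_add, Polynomial.eval_mul, Polynomial.eval_pow, Polynomial.eval_C,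
    Polynomial.eval_X, zero_mul, add_zero, zero_add] at hyz
  linear_combination hyz

lemma ternary_represent {R : Type*} [CommRing R] [IsLocalRing R]
    [Finite (IsLocalRing.ResidueField R)]
    (hodd : Odd (Nat.card (IsLocalRing.ResidueField R)))
    (hsq : ∀ x ∈ IsLocalRing.maximalIdeal R,
      ∃ y ∈ IsLocalRing.maximalIdeal R, (1 + y) ^ 2 = 1 + x)
    (d0 d1 d2 : R) (h0 : IsUnit d0) (h1 : IsUnit d1) (h2 : IsUnit d2) (s : R) :
    ∃ x y z : R, IsUnit x ∧ d0 * x ^ 2 + d1 * y ^ 2 + d2 * z ^ 2 = s := by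
  set π := IsLocalRing.residue R with hπ
  have hb : π d1 ≠ 0 := (h1.map π).ne_zero
  have hc : π d2 ≠ 0 := (h2.map π).ne_zero
  obtain ⟨y', z', hyz⟩ := finite_field_binary hodd (π d1) (π d2) (π (s - d0)) hb hc
  obtain ⟨y, hy⟩ := IsLocalRing.residue_surjective (R := R) y'
  obtain ⟨z, hz⟩ := IsLocalRing.residue_surjective (R := R) z'
  have hε : d0 + d1 * y ^ 2 + d2 * z ^ 2 - s ∈ IsLocalRing.maximalIdeal R := by
    have hπ0 : π (d0 + d1 * y ^ 2 + d2 * z ^ 2 - s) = 0 := by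
      have hsd : π (s - d0) = π s - π d0 := map_sub π s d0
      rw [hsd] at hyz
      rw [map_sub, map_add, map_add, map_mul, map_mul, map_pow, map_pow, hπ, hy, hz, ← hπ]
      linear_combination hyz
    exact Ideal.Quotient.eq_zero_iff_mem.mp hπ0
  obtain ⟨u0, hu0⟩ := h0
  have hmem : -((d0 + d1 * y ^ 2 + d2 * z ^ 2 - s) * (↑u0⁻¹ : R)) ∈
      IsLocalRing.maximalIdeal R :=
    neg_mem (Ideal.mul_mem_right _ _ hε)
  obtain ⟨w, hwmem, hw⟩ := hsq _ hmem
  have hxu : IsUnit (1 + w) :=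
    unit_add_nonunit isUnit_one (mem_nonunits_iff.mp ((IsLocalRing.mem_maximalIdeal w).mp hwmem))
  refine ⟨1 + w, y, z, hxu, ?_⟩
  have hdu : d0 * (↑u0⁻¹ : R) = 1 := by rw [← hu0, Units.mul_inv]
  have hkey : d0 * (1 + w) ^ 2 = d0 - (d0 + d1 * y ^ 2 + d2 * z ^ 2 - s) := by
    rw [hw]
    linear_combination (-(d0 + d1 * y ^ 2 + d2 * z ^ 2 - s)) * hdu
  linear_combination hkey

/-- Lemma 3.8(c): if `m > 2` then every element of the fixed ring `R` (unit or not)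
is the length of a primitive vector; in particular `h` is isotropic. -/
theorem stmt_13 {A V : Type*} [Ring A] [StarRing A] [IsLocalRing A]
    [AddCommGroup V] [Module Aᵐᵒᵖ V]
    (hcent : ∀ a : A, star a = a → a ∈ Set.center A)
    (h2 : IsUnit (2 : A))
    (R : Type*) [CommRing R] [IsLocalRing R] [Algebra R A]
    (hinj : Function.Injective (algebraMap R A))
    (hfix : ∀ a : A, star a = a ↔ a ∈ Set.range (algebraMap R A))
    [Finite (IsLocalRing.ResidueField R)]
    (hodd : Odd (Nat.card (IsLocalRing.ResidueField R)))
    (hsq : ∀ x ∈ IsLocalRing.maximalIdeal R,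
      ∃ y ∈ IsLocalRing.maximalIdeal R, (1 + y) ^ 2 = 1 + x)
    (m : ℕ) (hm : 2 < m) (b : Module.Basis (Fin m) Aᵐᵒᵖ V)
    (h : HermitianForm A V) (hnd : h.Nondeg) :
    (∀ s : R, ∃ v : V, IsPrimitive A m v ∧ h.toFun v v = algebraMap R A s) ∧
    (∃ v : V, IsPrimitive A m v ∧ h.toFun v v = 0) := by
  classical
  have main : ∀ s : R, ∃ v : V, IsPrimitive A m v ∧ h.toFun v v = algebraMap R A s := by
    intro s
    have hstarρ : ∀ r : R, star (algebraMap R A r) = algebraMap R A r :=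
      fun r => (hfix _).mpr ⟨r, rfl⟩
    have hunitρ : ∀ r : R, IsUnit (algebraMap R A r) → IsUnit r := by
      intro r hr
      obtain ⟨v, hv⟩ := hr
      have hb1 : algebraMap R A r * (↑v⁻¹ : A) = 1 := by rw [← hv, Units.mul_inv]
      have h1 : star (↑v⁻¹ : A) * algebraMap R A r = 1 := by
        rw [← hstarρ r, ← star_mul, hb1, star_one]
      have hsb : star (↑v⁻¹ : A) = ↑v⁻¹ := by
        calc star (↑v⁻¹ : A) = star (↑v⁻¹ : A) * (algebraMap R A r * ↑v⁻¹) := by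
              rw [hb1, mul_one]
          _ = (star (↑v⁻¹ : A) * algebraMap R A r) * ↑v⁻¹ := by rw [mul_assoc]
          _ = ↑v⁻¹ := by rw [h1, one_mul]
      obtain ⟨r', hr'⟩ := (hfix _).mp hsb
      refine IsUnit.of_mul_eq_one (a := r) r' (hinj ?_)
      rw [map_mul, map_one, hr', hb1]
    set i0 : Fin m := ⟨0, by omega⟩ with hi0
    set i1 : Fin m := ⟨1, by omega⟩ with hi1
    set i2 : Fin m := ⟨2, by omega⟩ with hi2
    have h01 : i0 ≠ i1 := by simp [hi0, hi1, Fin.ext_iff]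
    have h02 : i0 ≠ i2 := by simp [hi0, hi2, Fin.ext_iff]
    have h12 : i1 ≠ i2 := by simp [hi1, hi2, Fin.ext_iff]
    obtain ⟨c1, hc1⟩ := diag_step h hnd h2 b ∅ (by simp) i0 (by simp)
    obtain ⟨c2, hc2⟩ := diag_step h hnd h2 c1 (insert i0 ∅) hc1 i1
      (by simp only [Finset.mem_insert, Finset.notMem_empty, or_false]; exact Ne.symm h01)
    obtain ⟨c3, hc3⟩ := diag_step h hnd h2 c2 (insert i1 (insert i0 ∅)) hc2 i2
      (by simp only [Finset.mem_insert, Finset.notMem_empty, or_false]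
          push_neg
          exact ⟨Ne.symm h12, Ne.symm h02⟩)
    have hd0 := hc3 i0 (by simp)
    have hd1 := hc3 i1 (by simp)
    have hd2 := hc3 i2 (by simp)
    obtain ⟨r0, hr0⟩ := (hfix (h.toFun (c3 i0) (c3 i0))).mp (h.conj_symm _ _).symm
    obtain ⟨r1, hr1⟩ := (hfix (h.toFun (c3 i1) (c3 i1))).mp (h.conj_symm _ _).symm
    obtain ⟨r2, hr2⟩ := (hfix (h.toFun (c3 i2) (c3 i2))).mp (h.conj_symm _ _).symm
    have hur0 : IsUnit r0 := hunitρ r0 (by rw [hr0]; exact hd0.1)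
    have hur1 : IsUnit r1 := hunitρ r1 (by rw [hr1]; exact hd1.1)
    have hur2 : IsUnit r2 := hunitρ r2 (by rw [hr2]; exact hd2.1)
    obtain ⟨x, y, z, hx, hxyz⟩ := ternary_represent hodd hsq r0 r1 r2 hur0 hur1 hur2 s
    set v : V := op (algebraMap R A x) • c3 i0 + op (algebraMap R A y) • c3 i1 +
      op (algebraMap R A z) • c3 i2 with hvdef
    have hpair : ∀ (p q : R) (i j : Fin m),
        h.toFun (op (algebraMap R A p) • c3 i) (op (algebraMap R A q) • c3 j)
          = algebraMap R A p * (h.toFun (c3 i) (c3 j) * algebraMap R A q) := by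
      intro p q i j
      rw [h.smul_left, h.smul_right, hstarρ]
    have hvv : h.toFun v v = algebraMap R A s := by
      rw [hvdef]
      simp only [h.add_left, h.add_right, hpair]
      rw [hd0.2 i1 (Ne.symm h01), hd0.2 i2 (Ne.symm h02), hd1.2 i0 h01, hd1.2 i2 (Ne.symm h12),
        hd2.2 i0 h02, hd2.2 i1 h12, ← hr0, ← hr1, ← hr2]
      simp only [mul_zero, zero_mul, add_zero, zero_add, ← map_mul, ← map_add]
      exact congrArg _ (by linear_combination hxyz)
    have hcoord : c3.coord i0 v = op (algebraMap R A x) := by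
      rw [hvdef]
      simp only [map_add, map_smul, Module.Basis.coord_apply, Module.Basis.repr_self, Finsupp.smul_apply,
        Finsupp.single_apply]
      simp [Ne.symm h01, Ne.symm h02]
    have hop : IsUnit (c3.coord i0 v) := by
      rw [hcoord]
      exact (hx.map (algebraMap R A)).op
    obtain ⟨uu, huu⟩ := hop
    exact ⟨v, ⟨replaceBasis c3 i0 v uu huu, i0, replaceBasis_same c3 i0 v uu huu⟩, hvv⟩
  refine ⟨main, ?_⟩
  obtain ⟨v, hp, hv⟩ := main 0
  exact ⟨v, hp, by rwa [map_zero] at hv⟩
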